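/- Let E be a nonempty closed convex subset of a Banach space X, and T : E → E a contractive-like operator (with constant δ ∈ [0,1) and gauge φ) with a fixed point p. Fix k ≥ 2 and let {α_n}, {β_n^i} (i = 1,...,k−1) be sequences in [0,1) with ∑ α_n = ∞. Define the multistep iteration: x_0 ∈ E, y_n^{k−1} = (1 − β_n^{k−1}) x_n + β_n^{k−1} T x_n, y_n^i = (1 − β_n^i) y_n^{i+1} + β_n^i T y_n^{i+1} for i = k−2,...,1, and x_{n+1} = (1 − α_n) y_n^1 + α_n T y_n^1. Then x_n converges to p, the unique fixed point of T. -/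

import Mathlib

open Filter Topology

theorem multistep_iteration_converges
    {X : Type*} [NormedAddCommGroup X] [NormedSpace ℝ X] [CompleteSpace X]
    (E : Set X) (hEne : E.Nonempty) (hEcl : IsClosed E) (hEco : Convex ℝ E)
    (T : X → X) (hT : Set.MapsTo T E E)
    (δ : ℝ) (hδ : δ ∈ Set.Ico (0 : ℝ) 1)
    (φ : ℝ → ℝ) (hφmono : StrictMonoOn φ (Set.Ici 0))
    (hφcont : ContinuousOn φ (Set.Ici 0)) (hφ0 : φ 0 = 0)
    (hcontr : ∀ x ∈ E, ∀ y ∈ E, ‖T x - T y‖ ≤ δ * ‖x - y‖ + φ ‖x - T x‖)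
    (p : X) (hp : p ∈ E) (hTp : T p = p)
    (k : ℕ) (hk : 2 ≤ k)
    (α : ℕ → ℝ) (β : ℕ → ℕ → ℝ)
    (hα : ∀ n, α n ∈ Set.Ico (0 : ℝ) 1)
    (hβ : ∀ n i, β n i ∈ Set.Ico (0 : ℝ) 1)
    (hαdiv : Tendsto (fun N => ∑ n ∈ Finset.range N, α n) atTop atTop)
    (x : ℕ → X) (y : ℕ → ℕ → X) (hx0 : x 0 ∈ E)
    (hyk : ∀ n, y n (k - 1) = (1 - β n (k - 1)) • x n + β n (k - 1) • T (x n))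
    (hyi : ∀ n, ∀ i, 1 ≤ i → i ≤ k - 2 →
      y n i = (1 - β n i) • y n (i + 1) + β n i • T (y n (i + 1)))
    (hxrec : ∀ n, x (n + 1) = (1 - α n) • y n 1 + α n • T (y n 1)) :
    Tendsto x atTop (𝓝 p) ∧ ∀ q ∈ E, T q = q → q = p := by
  have key : ∀ z ∈ E, ‖T z - p‖ ≤ δ * ‖z - p‖ := by
    intro z hz
    have h := hcontr p hp z hz
    rw [hTp, sub_self, norm_zero, hφ0, add_zero, norm_sub_rev p (T z),
      norm_sub_rev p z] at h
    exact h
  have step : ∀ t : ℝ, 0 ≤ t → t < 1 → ∀ z ∈ E,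
      ((1 - t) • z + t • T z ∈ E) ∧
      ‖(1 - t) • z + t • T z - p‖ ≤ (1 - (1 - δ) * t) * ‖z - p‖ := by
    intro t ht0 ht1 z hz
    refine ⟨hEco hz (hT hz) (by linarith) ht0 (by ring), ?_⟩
    have hTz := key z hz
    have hid : (1 - t) • z + t • T z - p = (1 - t) • (z - p) + t • (T z - p) := by
      module
    rw [hid]
    calc ‖(1 - t) • (z - p) + t • (T z - p)‖
        ≤ ‖(1 - t) • (z - p)‖ + ‖t • (T z - p)‖ := norm_add_le _ _
      _ = (1 - t) * ‖z - p‖ + t * ‖T z - p‖ := by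
          rw [norm_smul, norm_smul, Real.norm_of_nonneg (by linarith),
            Real.norm_of_nonneg ht0]
      _ ≤ (1 - t) * ‖z - p‖ + t * (δ * ‖z - p‖) := by nlinarith
      _ = (1 - (1 - δ) * t) * ‖z - p‖ := by ring
  have hδ0 := hδ.1
  have hδ1 := hδ.2
  have hfac : ∀ n, 0 ≤ 1 - (1 - δ) * α n := by
    intro n
    have ha1 := (hα n).1
    have ha2 := (hα n).2
    nlinarith
  have ystep : ∀ n, x n ∈ E → ∀ d j, 1 ≤ j → j ≤ k - 1 → k - 1 - j = d →
      y n j ∈ E ∧ ‖y n j - p‖ ≤ ‖x n - p‖ := by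
    intro n hxn d
    induction d with
    | zero =>
      intro j h1 h2 hd
      have hj : j = k - 1 := by omega
      subst hj
      rw [hyk n]
      obtain ⟨hm, hb⟩ := step _ (hβ n (k - 1)).1 (hβ n (k - 1)).2 _ hxn
      refine ⟨hm, hb.trans ?_⟩
      have hb1 := (hβ n (k - 1)).1
      exact mul_le_of_le_one_left (norm_nonneg _)
        (by nlinarith [mul_nonneg (sub_nonneg.mpr hδ1.le) hb1])
    | succ m ih =>
      intro j h1 h2 hd
      have hj2 : j ≤ k - 2 := by omega
      have hnext := ih (j + 1) (by omega) (by omega) (by omega)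
      rw [hyi n j h1 hj2]
      obtain ⟨hm', hb⟩ := step _ (hβ n j).1 (hβ n j).2 _ hnext.1
      refine ⟨hm', hb.trans ?_⟩
      have hb1 := (hβ n j).1
      exact (mul_le_of_le_one_left (norm_nonneg _)
        (by nlinarith [mul_nonneg (sub_nonneg.mpr hδ1.le) hb1])).trans hnext.2
  have hstep2 : ∀ n, x n ∈ E →
      x (n + 1) ∈ E ∧ ‖x (n + 1) - p‖ ≤ (1 - (1 - δ) * α n) * ‖x n - p‖ := by
    intro n hxn
    have hy1 := ystep n hxn (k - 1 - 1) 1 le_rfl (by omega) rfl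
    rw [hxrec n]
    obtain ⟨hm, hb⟩ := step _ (hα n).1 (hα n).2 _ hy1.1
    refine ⟨hm, hb.trans ?_⟩
    exact mul_le_mul_of_nonneg_left hy1.2 (hfac n)
  have hbound : ∀ n, x n ∈ E ∧
      ‖x n - p‖ ≤ ‖x 0 - p‖ * ∏ i ∈ Finset.range n, (1 - (1 - δ) * α i) := by
    intro n
    induction n with
    | zero => simpa using hx0
    | succ m ih =>
      obtain ⟨hE', hb'⟩ := hstep2 m ih.1
      refine ⟨hE', ?_⟩
      rw [Finset.prod_range_succ]
      calc ‖x (m + 1) - p‖ ≤ (1 - (1 - δ) * α m) * ‖x m - p‖ := hb'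
        _ ≤ (1 - (1 - δ) * α m) *
            (‖x 0 - p‖ * ∏ i ∈ Finset.range m, (1 - (1 - δ) * α i)) :=
          mul_le_mul_of_nonneg_left ih.2 (hfac m)
        _ = ‖x 0 - p‖ * ((∏ i ∈ Finset.range m, (1 - (1 - δ) * α i)) *
            (1 - (1 - δ) * α m)) := by ring
  have hprod : ∀ n, ∏ i ∈ Finset.range n, (1 - (1 - δ) * α i) ≤
      Real.exp (-(1 - δ) * ∑ i ∈ Finset.range n, α i) := by
    intro n
    calc ∏ i ∈ Finset.range n, (1 - (1 - δ) * α i)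
        ≤ ∏ i ∈ Finset.range n, Real.exp (-((1 - δ) * α i)) := by
          refine Finset.prod_le_prod (fun i _ => hfac i) (fun i _ => ?_)
          nlinarith [Real.add_one_le_exp (-((1 - δ) * α i))]
      _ = Real.exp (∑ i ∈ Finset.range n, -((1 - δ) * α i)) :=
          (Real.exp_sum _ _).symm
      _ = Real.exp (-(1 - δ) * ∑ i ∈ Finset.range n, α i) := by
          congr 1
          rw [Finset.sum_neg_distrib, ← Finset.mul_sum, neg_mul]
  have hS : Tendsto (fun n => (1 - δ) * ∑ i ∈ Finset.range n, α i) atTop atTop :=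
    hαdiv.const_mul_atTop (by linarith)
  have hexp : Tendsto (fun n => Real.exp (-(1 - δ) * ∑ i ∈ Finset.range n, α i))
      atTop (𝓝 0) := by
    have : Tendsto (fun n => -(1 - δ) * ∑ i ∈ Finset.range n, α i) atTop atBot := by
      have h := tendsto_neg_atTop_atBot.comp hS
      convert h using 2 with n
      simp [Function.comp]
      ring
    exact Real.tendsto_exp_atBot.comp this
  have hnorm : Tendsto (fun n => ‖x n - p‖) atTop (𝓝 0) := by
    apply squeeze_zero (fun n => norm_nonneg _)
      (fun n => (hbound n).2.trans (mul_le_mul_of_nonneg_left (hprod n) (norm_nonneg _)))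
    simpa using tendsto_const_nhds.mul hexp
  constructor
  · rw [tendsto_iff_norm_sub_tendsto_zero]
    exact hnorm
  · intro q hq hTq
    have h := key q hq
    rw [hTq] at h
    have h0 : ‖q - p‖ = 0 := le_antisymm (by nlinarith [norm_nonneg (q - p)])
      (norm_nonneg _)
    have := norm_eq_zero.mp h0
    exact sub_eq_zero.mp this
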